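/- In the ring of formal power series in w with coefficients in the polynomial ring ℚ[t], one has the identity (e^w − 1)^2 · ( 1 + t·w + Σ_{n≥0} ( t·B_{n+1}(t)/(n+1) − B_{n+2}(t)/(n+2) ) · w^{n+2}/n! ) = w^2 · Σ_{n≥0} (1+t)^n w^n/n!. (Equivalently, e^{(1+t)w}/(e^w−1)^2 = 1/w^2 + t/w + Σ_{n≥0} { t·B_{n+1}(t)/(n+1) − B_{n+2}(t)/(n+2) } w^n/n!.) -/

import Mathlib

open PowerSeries Polynomial

noncomputable def AA : PowerSeries (Polynomial ℚ) :=
  PowerSeries.mk fun n => aeval Polynomial.X (((1:ℚ) / n.factorial) • Polynomial.bernoulli n)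

theorem hF : (PowerSeries.mk (fun m : ℕ =>
        if m = 0 then (1 : Polynomial ℚ)
        else if m = 1 then Polynomial.X
        else (Polynomial.X * Polynomial.bernoulli (m - 1) * Polynomial.C (((m - 1 : ℕ) : ℚ)⁻¹)
              - Polynomial.bernoulli m * Polynomial.C (((m : ℕ) : ℚ)⁻¹))
             * Polynomial.C ((Nat.factorial (m - 2) : ℚ)⁻¹)))
    = PowerSeries.C Polynomial.X * PowerSeries.X * AA + AA
      - PowerSeries.X * d⁄dX (Polynomial ℚ) AA := by
  refine PowerSeries.ext fun m => ?_
  rcases m with _ | _ | k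
  · simp [AA, aeval_X_left_apply]
  · simp only [AA, map_sub, map_add, PowerSeries.coeff_mk, mul_assoc, PowerSeries.coeff_C_mul,
      PowerSeries.coeff_succ_X_mul, PowerSeries.coeff_derivative, aeval_X_left_apply]
    norm_num [Polynomial.bernoulli_zero]
  · simp only [AA, map_sub, map_add, PowerSeries.coeff_mk, mul_assoc, PowerSeries.coeff_C_mul,
      PowerSeries.coeff_succ_X_mul, PowerSeries.coeff_derivative, aeval_X_left_apply,
      show k+1+1-2 = k from rfl, show k+1+1-1 = k+1 from rfl, if_neg (Nat.succ_ne_zero _),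
      Polynomial.smul_eq_C_mul]
    rw [if_neg (by omega), show ((k+1 : ℕ) : Polynomial ℚ) + 1 = Polynomial.C ((k:ℚ)+1+1) by
      simp [Polynomial.C_add]]
    have h1 : Polynomial.C (((k+1:ℕ):ℚ)⁻¹) * Polynomial.C ((k.factorial:ℚ)⁻¹)
        = Polynomial.C ((1:ℚ)/(k+1).factorial) := by
      rw [← Polynomial.C_mul]; congr 1
      rw [Nat.factorial_succ]; push_cast; field_simp
    have h2 : Polynomial.C (((k+2:ℕ):ℚ)⁻¹) * Polynomial.C ((k.factorial:ℚ)⁻¹)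
        = Polynomial.C ((1:ℚ)/(k+2).factorial * ((k:ℚ)+1)) := by
      rw [← Polynomial.C_mul]; congr 1
      rw [show (k+2).factorial = (k+2) * ((k+1) * k.factorial) by
        rw [← Nat.factorial_succ, ← Nat.factorial_succ]]
      have hk1 : ((k:ℚ)+1) ≠ 0 := by positivity
      have hk2 : ((k:ℚ)+2) ≠ 0 := by positivity
      have hkf : ((k.factorial : ℕ) : ℚ) ≠ 0 := Nat.cast_ne_zero.mpr (Nat.factorial_ne_zero k)
      push_cast
      field_simp
    push_cast at h1 h2 ⊢
    norm_num at h1 h2 ⊢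
    rw [show ((k:ℚ)+1+1) = ((k:ℚ)+2) by ring]
    linear_combination (Polynomial.X * Polynomial.bernoulli (k+1)) * h1
      - Polynomial.bernoulli (k+2) * h2


theorem dE : d⁄dX (Polynomial ℚ) (PowerSeries.exp _) = PowerSeries.exp _ := by
  refine PowerSeries.ext fun n => ?_
  simp only [PowerSeries.coeff_derivative, PowerSeries.coeff_exp, Polynomial.algebraMap_eq,
    Nat.factorial_succ]
  rw [show ((n : Polynomial ℚ) + 1) = Polynomial.C ((n : ℚ) + 1) by simp, ← Polynomial.C_mul]
  congr 1
  have : ((n : ℚ) + 1) ≠ 0 := by positivity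
  field_simp
  push_cast
  ring

theorem dEt : d⁄dX (Polynomial ℚ) (rescale Polynomial.X (PowerSeries.exp _))
    = PowerSeries.C Polynomial.X * rescale Polynomial.X (PowerSeries.exp _) := by
  refine PowerSeries.ext fun n => ?_
  simp only [PowerSeries.coeff_derivative, coeff_rescale, PowerSeries.coeff_exp,
    Polynomial.algebraMap_eq, Nat.factorial_succ, pow_succ, PowerSeries.coeff_C_mul]
  rw [show ((n : Polynomial ℚ) + 1) = Polynomial.C ((n : ℚ) + 1) by simp, mul_assoc,
    ← Polynomial.C_mul]
  have : ((n : ℚ) + 1) ≠ 0 := by positivity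
  rw [show (1 / (((n+1) * n.factorial : ℕ) : ℚ)) * ((n:ℚ)+1) = 1 / n.factorial by
    field_simp
    push_cast
    ring]
  ring

theorem stmt1 :
    ((PowerSeries.mk (fun n : ℕ => Polynomial.C ((Nat.factorial n : ℚ)⁻¹)) :
        PowerSeries (Polynomial ℚ)) - 1) ^ 2 *
      PowerSeries.mk (fun m : ℕ =>
        if m = 0 then (1 : Polynomial ℚ)
        else if m = 1 then Polynomial.X
        else (Polynomial.X * Polynomial.bernoulli (m - 1) * Polynomial.C (((m - 1 : ℕ) : ℚ)⁻¹)
              - Polynomial.bernoulli m * Polynomial.C (((m : ℕ) : ℚ)⁻¹))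
             * Polynomial.C ((Nat.factorial (m - 2) : ℚ)⁻¹)) =
    PowerSeries.X ^ 2 *
      PowerSeries.mk (fun n : ℕ =>
        (1 + Polynomial.X) ^ n * Polynomial.C ((Nat.factorial n : ℚ)⁻¹)) := by
  have hE : (PowerSeries.mk (fun n : ℕ => Polynomial.C ((Nat.factorial n : ℚ)⁻¹)) :
      PowerSeries (Polynomial ℚ)) = PowerSeries.exp _ := by
    ext n
    simp [PowerSeries.coeff_exp, Polynomial.algebraMap_eq, one_div]
  have hG : (PowerSeries.mk (fun n : ℕ =>
        (1 + Polynomial.X) ^ n * Polynomial.C ((Nat.factorial n : ℚ)⁻¹)) :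
      PowerSeries (Polynomial ℚ)) = rescale (1 + Polynomial.X) (PowerSeries.exp _) := by
    ext n
    simp [coeff_rescale, PowerSeries.coeff_exp, Polynomial.algebraMap_eq, one_div]
  rw [hE, hG, hF]
  have h1 := Polynomial.bernoulli_generating_function (Polynomial.X : Polynomial ℚ)
  rw [show (PowerSeries.mk fun n => aeval Polynomial.X ((1 / (n.factorial : ℚ)) •
      Polynomial.bernoulli n)) = AA from rfl] at h1
  have h2 := congrArg (d⁄dX (Polynomial ℚ)) h1
  simp only [Derivation.leibniz, smul_eq_mul, map_sub, Derivation.map_one_eq_zero,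
    PowerSeries.derivative_X, dE, dEt, sub_zero, mul_one] at h2
  have hadd := PowerSeries.exp_mul_exp_eq_exp_add (Polynomial.X : Polynomial ℚ) 1
  rw [rescale_one, RingHom.id_apply] at hadd
  rw [show (1 + Polynomial.X : Polynomial ℚ) = Polynomial.X + 1 by ring, ← hadd]
  linear_combination (PowerSeries.C Polynomial.X * PowerSeries.X * (PowerSeries.exp _ - 1)
      + (PowerSeries.exp _ - 1) + PowerSeries.X * PowerSeries.exp _) * h1
    - (PowerSeries.X * (PowerSeries.exp _ - 1)) * h2
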